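/- Consider the square (r−l+2)×(r−l+2) linear system from the ironing construction: unknowns are c and τ(l+1),…,τ(r); the k-th equation (k = l,…,r) is c = φ(k) + τ(k)/f(k) − τ(k+1)/f(k), with τ(l) = τ(r+1) = 0. The coefficient matrix has determinant of absolute value (∑_{j=l}^{r} f(j)) / (∏_{j=l}^{r} f(j)), hence the system has a unique solution, and its c-component equals c = (∑_{j=l}^{r} φ(j) f(j)) / (∑_{j=l}^{r} f(j)). -/

import Mathlib

open Finset

private lemma fin_sum_icc (l r : ℕ) (hlr : l ≤ r) (f : ℕ → ℝ) :
    ∑ i : Fin (r - l + 1), f (l + i) = ∑ j ∈ Icc l r, f j := by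
  rw [Fin.sum_univ_eq_sum_range (fun i => f (l + i)) (r - l + 1), ← Finset.Ico_add_one_right_eq_Icc,
    Finset.sum_Ico_eq_sum_range, show r + 1 - l = r - l + 1 by omega]

private lemma fin_prod_icc (l r : ℕ) (hlr : l ≤ r) (f : ℕ → ℝ) :
    ∏ i : Fin (r - l + 1), f (l + i) = ∏ j ∈ Icc l r, f j := by
  rw [Fin.prod_univ_eq_prod_range (fun i => f (l + i)) (r - l + 1), ← Finset.Ico_add_one_right_eq_Icc,
    Finset.prod_Ico_eq_prod_range, show r + 1 - l = r - l + 1 by omega]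

private lemma telescope_icc (l r : ℕ) (hlr : l ≤ r) (τ : ℕ → ℝ) :
    ∑ k ∈ Icc l r, (τ k - τ (k + 1)) = τ l - τ (r + 1) := by
  rw [← Finset.Ico_add_one_right_eq_Icc, Finset.sum_Ico_eq_sum_range]
  have h := Finset.sum_range_sub' (fun i => τ (l + i)) (r + 1 - l)
  have h2 : ∀ i, τ (l + i) - τ (l + (i + 1)) = τ (l + i) - τ (l + i + 1) := by
    intro i; rw [← Nat.add_assoc]
  simp only [h2] at h
  rw [h]
  congr 2
  omega

private lemma c_value_aux (l r : ℕ) (hl : 1 ≤ l) (hlr : l ≤ r)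
    (f : ℕ → ℝ) (hf : ∀ j, l ≤ j → j ≤ r → 0 < f j) (φ : ℕ → ℝ)
    (c : ℝ) (τ : ℕ → ℝ)
    (h0 : ∀ k, (k < l + 1 ∨ r < k) → τ k = 0)
    (heq : ∀ k, l ≤ k → k ≤ r → c = φ k + τ k / f k - τ (k + 1) / f k) :
    c = (∑ j ∈ Icc l r, φ j * f j) / (∑ j ∈ Icc l r, f j) := by
  have hfpos : 0 < ∑ j ∈ Icc l r, f j :=
    Finset.sum_pos (fun j hj => hf j (mem_Icc.mp hj).1 (mem_Icc.mp hj).2)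
      ⟨l, mem_Icc.mpr ⟨le_rfl, hlr⟩⟩
  have key : ∀ k ∈ Icc l r, c * f k = φ k * f k + (τ k - τ (k + 1)) := by
    intro k hk
    obtain ⟨h1, h2⟩ := mem_Icc.mp hk
    have hfk := (hf k h1 h2).ne'
    rw [heq k h1 h2]
    field_simp
    ring
  have hsum : c * (∑ j ∈ Icc l r, f j)
      = (∑ j ∈ Icc l r, φ j * f j) + ∑ k ∈ Icc l r, (τ k - τ (k + 1)) := by
    rw [Finset.mul_sum, ← Finset.sum_add_distrib]
    exact Finset.sum_congr rfl key
  rw [telescope_icc l r hlr τ, h0 l (Or.inl (by omega)), h0 (r + 1) (Or.inr (by omega)),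
    sub_zero, add_zero] at hsum
  field_simp
  linarith [hsum]


/-- the square linear system of the ironing construction (unknowns
`c` and `τ(l+1),…,τ(r)`; equations `c = φ(k) + τ(k)/f(k) − τ(k+1)/f(k)` for
`k = l,…,r`, with `τ(l) = τ(r+1) = 0`).  Its coefficient matrix has determinant
of absolute value `(∑_{j=l}^r f j) / (∏_{j=l}^r f j)`, the system has a unique
solution, and the `c`-component of any solution is the `f`-weighted average of
`φ` on `[l,r]`. -/
theorem ironing_system_unique_solution
    (l r : ℕ) (hl : 1 ≤ l) (hlr : l ≤ r)
    (f : ℕ → ℝ) (hf : ∀ j, l ≤ j → j ≤ r → 0 < f j) (φ : ℕ → ℝ) :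
    -- coefficient matrix: row i is equation k = l+i; column 0 is the c-column,
    -- column j (j ≥ 1) is the τ(l+j)-column
    (|(Matrix.of fun i j : Fin (r - l + 1) =>
        if j.val = 0 then (1 : ℝ)
        else if j.val = i.val then -1 / f (l + i.val)
        else if j.val = i.val + 1 then 1 / f (l + i.val)
        else 0).det|
      = (∑ j ∈ Icc l r, f j) / (∏ j ∈ Icc l r, f j)) ∧
    (∃! x : ℝ × (ℕ → ℝ),
      (∀ k, (k < l + 1 ∨ r < k) → x.2 k = 0) ∧
      (∀ k, l ≤ k → k ≤ r → x.1 = φ k + x.2 k / f k - x.2 (k + 1) / f k)) ∧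
    (∀ x : ℝ × (ℕ → ℝ),
      ((∀ k, (k < l + 1 ∨ r < k) → x.2 k = 0) ∧
        (∀ k, l ≤ k → k ≤ r → x.1 = φ k + x.2 k / f k - x.2 (k + 1) / f k)) →
      x.1 = (∑ j ∈ Icc l r, φ j * f j) / (∑ j ∈ Icc l r, f j)) := by
  refine ⟨?_, ?_, ?_⟩
  ·
    set g : Fin (r - l + 1) → ℝ := fun i => f (l + i) with hg
    have hgpos : ∀ i, 0 < g i := fun i => hf _ (by omega) (by have := i.isLt; omega)
    set M : Matrix (Fin (r - l + 1)) (Fin (r - l + 1)) ℝ :=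
      Matrix.of fun i j : Fin (r - l + 1) =>
          if j.val = 0 then (1 : ℝ)
          else if j.val = i.val then -1 / f (l + i.val)
          else if j.val = i.val + 1 then 1 / f (l + i.val)
          else 0 with hM
    set N : Matrix (Fin (r - l + 1)) (Fin (r - l + 1)) ℝ :=
      Matrix.of fun i j : Fin (r - l + 1) =>
          if j.val = 0 then g i
          else if j.val = i.val then -1
          else if j.val = i.val + 1 then 1
          else 0 with hN
    have hprodpos : 0 < ∏ i, g i := Finset.prod_pos fun i _ => hgpos i
    have hsumpos : 0 < ∑ i, g i := Finset.sum_pos (fun i _ => hgpos i) univ_nonempty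
    have hNM : N = Matrix.of (fun i j => g i * M i j) := by
      ext i j
      have hgi := (hgpos i).ne'
      have hfi : f (l + i) ≠ 0 := hgi
      simp only [hN, hM, Matrix.of_apply]
      split_ifs <;> field_simp <;> simp [hg, hfi]
    have hNdet : N.det = (∏ i, g i) * M.det := by
      rw [hNM]; exact Matrix.det_mul_column g M
    set T : Matrix (Fin (r - l + 1)) (Fin (r - l + 1)) ℝ :=
      N.updateRow 0 (∑ k, N k) with hT
    have hdetT : T.det = N.det := by
      simpa using Matrix.det_updateRow_sum N 0 (fun _ => (1 : ℝ))
    have hT0 : ∀ j : Fin (r - l + 1), T 0 j = if (j : ℕ) = 0 then (∑ i, g i) else 0 := by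
      intro j
      have hTj : T 0 j = ∑ k, N k j := by
        rw [hT, Matrix.updateRow_self]; exact Finset.sum_apply j univ fun k => N k
      rw [hTj]
      by_cases hj : (j : ℕ) = 0
      · rw [if_pos hj]
        exact Finset.sum_congr rfl fun k _ => by have hj0 : j = 0 := (by simpa using hj); simp [hN, hj, hj0]
      · rw [if_neg hj]
        have hj1 : 1 ≤ (j : ℕ) := by omega
        set j' : Fin (r - l + 1) := ⟨(j : ℕ) - 1, by have := j.isLt; omega⟩ with hj'
        have hpt : ∀ k : Fin (r - l + 1),
            N k j = (if k = j then (-1 : ℝ) else 0) + (if k = j' then (1 : ℝ) else 0) := by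
          intro k
          simp only [hN, Matrix.of_apply, Fin.ext_iff, hj']
          split_ifs <;> (try norm_num) <;> (exfalso; omega)
        rw [Finset.sum_congr rfl fun k _ => hpt k, Finset.sum_add_distrib]
        simp [Finset.sum_ite_eq']
    set B : Matrix (Fin (r - l)) (Fin (r - l)) ℝ :=
      T.submatrix Fin.succ (Fin.succAbove 0) with hB
    have hBval : ∀ i j : Fin (r - l),
        B i j = if (j : ℕ) = (i : ℕ) then (-1 : ℝ)
          else if (j : ℕ) = (i : ℕ) + 1 then 1 else 0 := by
      intro i j
      have : B i j = N i.succ j.succ := by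
        simp only [hB, Matrix.submatrix_apply, Fin.succAbove_zero, hT]
        rw [Matrix.updateRow_ne (Fin.succ_ne_zero i)]
      rw [this]
      simp only [hN, Matrix.of_apply, Fin.val_succ]
      split_ifs <;> (try rfl) <;> (try (exfalso; omega)) <;> simp_all
    have htri : B.BlockTriangular id := by
      intro i j hij
      have hij' : (j : ℕ) < (i : ℕ) := hij
      rw [hBval, if_neg (by omega), if_neg (by omega)]
    have hdetB : B.det = (-1 : ℝ) ^ (r - l) := by
      rw [Matrix.det_of_upperTriangular htri]
      have : ∀ i : Fin (r - l), B i i = -1 := fun i => by rw [hBval, if_pos rfl]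
      rw [Finset.prod_congr rfl fun i _ => this i, Finset.prod_const, Finset.card_univ,
        Fintype.card_fin]
    have hdetT2 : T.det = (∑ i, g i) * (-1 : ℝ) ^ (r - l) := by
      rw [Matrix.det_succ_row_zero]
      rw [Finset.sum_eq_single (0 : Fin (r - l + 1))]
      · rw [hT0 0, ← hB, hdetB]
        norm_num
      · intro b _ hb
        rw [hT0 b, if_neg (by simpa using hb)]
        ring
      · intro h
        exact absurd (Finset.mem_univ _) h
    have hMdet : M.det = (∑ i, g i) * (-1 : ℝ) ^ (r - l) / (∏ i, g i) := by
      rw [← hdetT2, hdetT, hNdet]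
      field_simp
    rw [hMdet, abs_div, abs_mul, abs_pow, abs_neg, abs_one, one_pow, mul_one,
      abs_of_pos hsumpos, abs_of_pos hprodpos, fin_sum_icc l r hlr f, fin_prod_icc l r hlr f]
  ·
    have hfpos : 0 < ∑ j ∈ Icc l r, f j :=
      Finset.sum_pos (fun j hj => hf j (mem_Icc.mp hj).1 (mem_Icc.mp hj).2)
        ⟨l, mem_Icc.mpr ⟨le_rfl, hlr⟩⟩
    set c₀ : ℝ := (∑ j ∈ Icc l r, φ j * f j) / (∑ j ∈ Icc l r, f j) with hc₀
    set S : ℕ → ℝ := fun k => ∑ j ∈ Icc l (k - 1), (φ j - c₀) * f j with hS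
    set τ₀ : ℕ → ℝ := fun k => if l + 1 ≤ k ∧ k ≤ r then S k else 0 with hτ₀
    have hSl : S l = 0 := by
      simp only [hS]
      rw [Finset.Icc_eq_empty (by omega), Finset.sum_empty]
    have hSr : S (r + 1) = 0 := by
      simp only [hS, Nat.add_sub_cancel]
      have : ∑ j ∈ Icc l r, (φ j - c₀) * f j
          = (∑ j ∈ Icc l r, φ j * f j) - c₀ * ∑ j ∈ Icc l r, f j := by
        rw [Finset.mul_sum, ← Finset.sum_sub_distrib]
        exact Finset.sum_congr rfl fun j _ => by ring
      rw [this, hc₀, div_mul_cancel₀ _ hfpos.ne', sub_self]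
    have hτS : ∀ k, l ≤ k → k ≤ r + 1 → τ₀ k = S k := by
      intro k hk1 hk2
      by_cases h : l + 1 ≤ k ∧ k ≤ r
      · simp only [hτ₀, if_pos h]
      · simp only [hτ₀, if_neg h]
        have : k = l ∨ k = r + 1 := by omega
        rcases this with h' | h' <;> rw [h']
        · exact hSl.symm
        · exact hSr.symm
    have hstep : ∀ k, l ≤ k → S (k + 1) = S k + (φ k - c₀) * f k := by
      intro k hk
      simp only [hS, Nat.add_sub_cancel]
      have hIcc : Icc l k = Icc l ((k - 1) + 1) := by congr 1; omega
      rw [hIcc, Finset.sum_Icc_succ_top (by omega : l ≤ (k - 1) + 1),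
        show k - 1 + 1 = k from by omega]
    have hbd : ∀ k, (k < l + 1 ∨ r < k) → τ₀ k = 0 := by
      intro k hk
      simp only [hτ₀]
      rw [if_neg (by omega)]
    have heq₀ : ∀ k, l ≤ k → k ≤ r → c₀ = φ k + τ₀ k / f k - τ₀ (k + 1) / f k := by
      intro k hk1 hk2
      have hfk := (hf k hk1 hk2).ne'
      rw [hτS k hk1 (by omega), hτS (k + 1) (by omega) (by omega), hstep k hk1]
      field_simp
      ring
    refine ⟨(c₀, τ₀), ⟨hbd, heq₀⟩, ?_⟩
    rintro ⟨c, τ⟩ ⟨hy0, hyeq⟩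
    simp only at hy0 hyeq
    have hyc : c = c₀ := c_value_aux l r hl hlr f hf φ c τ hy0 hyeq
    have hyτ : ∀ k, l ≤ k → k ≤ r + 1 → τ k = S k := by
      intro k hk1
      induction k, hk1 using Nat.le_induction with
      | base =>
        intro _
        rw [hy0 l (Or.inl (by omega)), hSl]
      | succ k hk ih =>
        intro hk2
        have hkr : k ≤ r := by omega
        have hfk := (hf k hk hkr).ne'
        have h1 := hyeq k hk hkr
        have h2 : τ (k + 1) = τ k + (φ k - c) * f k := by
          field_simp at h1
          linarith [h1]
        rw [h2, ih (by omega), hstep k hk, hyc]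
    have hτeq : τ = τ₀ := by
      funext k
      by_cases h : l + 1 ≤ k ∧ k ≤ r
      · rw [hyτ k (by omega) (by omega), hτS k (by omega) (by omega)]
      · rw [hy0 k (by omega), hbd k (by omega)]
    exact Prod.ext hyc hτeq
  · rintro ⟨c, τ⟩ ⟨h0, heq⟩
    exact c_value_aux l r hl hlr f hf φ c τ h0 heq
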